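/- Let a < b < c be real numbers. Then the limit as t → 0⁺ of t^(−1/2) ∫_a^c (χ_{(a,b)}(x) − ∫_a^b p_t(x,y) dy) dx exists and equals 1/√π, where χ_{(a,b)} denotes the characteristic function of the open interval (a,b). -/

import Mathlib

open MeasureTheory Real Filter

/-- The Gaussian heat kernel on `ℝ`. -/
noncomputable def heatKernel (t x y : ℝ) : ℝ :=
  (4 * Real.pi * t) ^ (-(1 : ℝ) / 2) * Real.exp (-(x - y) ^ 2 / (4 * t))

noncomputable def Ef (z : ℝ) : ℝ := ∫ s in (0:ℝ)..z, Real.exp (-s ^ 2)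

noncomputable def Psi (z : ℝ) : ℝ := z * Ef z + Real.exp (-z ^ 2) / 2

noncomputable def rfun (z : ℝ) : ℝ := Psi z - Real.sqrt Real.pi / 2 * z

lemma contG : Continuous fun s : ℝ => Real.exp (-s ^ 2) := by
  exact Real.continuous_exp.comp (by continuity)

lemma intG (u v : ℝ) : IntervalIntegrable (fun s : ℝ => Real.exp (-s ^ 2)) volume u v :=
  contG.intervalIntegrable u v

lemma Ef_hasDerivAt (z : ℝ) : HasDerivAt Ef (Real.exp (-z ^ 2)) z :=
  (contG.integral_hasStrictDerivAt 0 z).hasDerivAt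

lemma Ef_cont : Continuous Ef :=
  continuous_iff_continuousAt.2 fun z => (Ef_hasDerivAt z).continuousAt

lemma Ef_sub (p q : ℝ) : (∫ v in p..q, Real.exp (-v ^ 2)) = Ef q - Ef p := by
  have h := intervalIntegral.integral_add_adjacent_intervals (intG 0 p) (intG p q)
  unfold Ef; linarith

lemma Ef_neg (z : ℝ) : Ef (-z) = - Ef z := by
  have h := intervalIntegral.integral_comp_neg (a := 0) (b := -z)
    (fun s : ℝ => Real.exp (-s ^ 2))
  simp only [neg_neg, neg_zero] at h
  have h2 : (∫ x in (0:ℝ)..(-z), Real.exp (-(-x) ^ 2))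
      = ∫ x in (0:ℝ)..(-z), Real.exp (-x ^ 2) := by
    apply intervalIntegral.integral_congr; intro x _; norm_num
  unfold Ef
  rw [← h2, h, intervalIntegral.integral_symm]

lemma Psi_neg (z : ℝ) : Psi (-z) = Psi z := by
  unfold Psi; rw [Ef_neg, neg_sq]; ring

lemma Psi_zero : Psi 0 = 1 / 2 := by
  unfold Psi Ef; simp

lemma Psi_hasDerivAt (z : ℝ) : HasDerivAt Psi (Ef z) z := by
  have h1 : HasDerivAt (fun z : ℝ => z * Ef z) (Ef z + z * Real.exp (-z ^ 2)) z := by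
    have := (hasDerivAt_id z).mul (Ef_hasDerivAt z)
    simpa [add_comm, Pi.mul_def] using this
  have hsq : HasDerivAt (fun z : ℝ => -z ^ 2) (-(2 * z)) z := by
    simpa [Pi.neg_def] using (hasDerivAt_pow 2 z).neg
  have h2 : HasDerivAt (fun z : ℝ => Real.exp (-z ^ 2) / 2) (-(z * Real.exp (-z ^ 2))) z := by
    have := (hsq.exp).div_const 2
    refine this.congr_deriv ?_
    ring
  have h := h1.add h2
  have he : Ef z + z * Real.exp (-z ^ 2) + -(z * Real.exp (-z ^ 2)) = Ef z := by ring
  rw [he] at h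
  exact h

lemma Psi_cont : Continuous Psi :=
  continuous_iff_continuousAt.2 fun z => (Psi_hasDerivAt z).continuousAt

lemma Ef_lim : Tendsto Ef atTop (nhds (Real.sqrt Real.pi / 2)) := by
  have hi : IntegrableOn (fun s : ℝ => Real.exp (-s ^ 2)) (Set.Ioi 0) := by
    have := (integrable_exp_neg_mul_sq (one_pos)).integrableOn (s := Set.Ioi (0:ℝ))
    simpa using this
  have h := intervalIntegral_tendsto_integral_Ioi 0 hi tendsto_id
  have hg : (∫ s in Set.Ioi (0:ℝ), Real.exp (-s ^ 2)) = Real.sqrt Real.pi / 2 := by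
    have := integral_gaussian_Ioi 1
    simpa using this
  rw [hg] at h
  exact h

lemma tail_eq (z : ℝ) :
    (∫ s in Set.Ioi z, Real.exp (-s ^ 2)) = Real.sqrt Real.pi / 2 - Ef z := by
  have hi : IntegrableOn (fun s : ℝ => Real.exp (-s ^ 2)) (Set.Ioi z) := by
    have := (integrable_exp_neg_mul_sq (one_pos)).integrableOn (s := Set.Ioi z)
    simpa using this
  have h := intervalIntegral_tendsto_integral_Ioi z hi tendsto_id
  have h2 : Tendsto (fun i : ℝ => ∫ s in z..i, Real.exp (-s ^ 2)) atTop
      (nhds (Real.sqrt Real.pi / 2 - Ef z)) := by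
    refine (Ef_lim.sub_const (Ef z)).congr fun i => ?_
    rw [Ef_sub]
  exact tendsto_nhds_unique h h2

lemma tail_mul (z : ℝ) :
    (∫ s in Set.Ioi z, s * Real.exp (-s ^ 2)) = Real.exp (-z ^ 2) / 2 := by
  have hd : ∀ x ∈ Set.Ici z, HasDerivAt (fun s : ℝ => -(Real.exp (-s ^ 2) / 2))
      (x * Real.exp (-x ^ 2)) x := by
    intro x _
    have hsq : HasDerivAt (fun s : ℝ => -s ^ 2) (-(2 * x)) x := by
      simpa [Pi.neg_def] using (hasDerivAt_pow 2 x).neg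
    have := ((hsq.exp).div_const 2).neg
    refine this.congr_deriv ?_
    ring
  have hint : IntegrableOn (fun s : ℝ => s * Real.exp (-s ^ 2)) (Set.Ioi z) := by
    have := (integrable_mul_exp_neg_mul_sq (one_pos)).integrableOn (s := Set.Ioi z)
    simpa using this
  have htend : Tendsto (fun s : ℝ => -(Real.exp (-s ^ 2) / 2)) atTop (nhds 0) := by
    have h1 : Tendsto (fun s : ℝ => Real.exp (-s ^ 2)) atTop (nhds 0) :=
      Real.tendsto_exp_neg_atTop_nhds_zero.comp (tendsto_pow_atTop two_ne_zero)
    have := (h1.div_const 2).neg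
    simpa using this
  have h := integral_Ioi_of_hasDerivAt_of_tendsto' hd hint htend
  rw [h]; ring

lemma tail_nonneg (z : ℝ) : 0 ≤ Real.sqrt Real.pi / 2 - Ef z := by
  rw [← tail_eq]
  exact setIntegral_nonneg measurableSet_Ioi fun x _ => (Real.exp_pos _).le

lemma tail_le (z : ℝ) (hz : 1 ≤ z) :
    Real.sqrt Real.pi / 2 - Ef z ≤ Real.exp (-z ^ 2) / 2 := by
  rw [← tail_eq, ← tail_mul z]
  refine setIntegral_mono_on ?_ ?_ measurableSet_Ioi fun x hx => ?_
  · have := (integrable_exp_neg_mul_sq (one_pos)).integrableOn (s := Set.Ioi z)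
    simpa using this
  · have := (integrable_mul_exp_neg_mul_sq (one_pos)).integrableOn (s := Set.Ioi z)
    simpa using this
  · have hx1 : 1 ≤ x := le_trans hz (le_of_lt hx)
    nlinarith [Real.exp_pos (-x ^ 2)]

lemma rfun_lim : Tendsto rfun atTop (nhds 0) := by
  have hh : Tendsto (fun z : ℝ => z ^ 2 * Real.exp (-z ^ 2)) atTop (nhds 0) := by
    have := (Real.tendsto_pow_mul_exp_neg_atTop_nhds_zero 1).comp
      (tendsto_pow_atTop (two_ne_zero) (α := ℝ))
    simpa [Function.comp_def] using this
  have hg : Tendsto (fun z : ℝ => -(z ^ 2 * Real.exp (-z ^ 2))) atTop (nhds 0) := by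
    simpa using hh.neg
  refine tendsto_of_tendsto_of_tendsto_of_le_of_le' hg hh ?_ ?_
  · filter_upwards [eventually_ge_atTop (1:ℝ)] with z hz
    have h1 := tail_le z hz
    have h2 := tail_nonneg z
    have he := (Real.exp_pos (-z ^ 2)).le
    unfold rfun Psi
    nlinarith [mul_le_mul_of_nonneg_left h1 (by linarith : (0:ℝ) ≤ z),
      mul_nonneg (by linarith : (0:ℝ) ≤ z) he, sq_nonneg z,
      mul_le_mul_of_nonneg_right (by nlinarith : z / 2 ≤ z ^ 2) he]
  · filter_upwards [eventually_ge_atTop (1:ℝ)] with z hz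
    have h1 := tail_le z hz
    have h2 := tail_nonneg z
    have he := (Real.exp_pos (-z ^ 2)).le
    unfold rfun Psi
    nlinarith [mul_nonneg (by linarith : (0:ℝ) ≤ z) h2,
      mul_le_mul_of_nonneg_right (by nlinarith : (1:ℝ) / 2 ≤ z ^ 2) he]

lemma coeff_eq (t : ℝ) (ht : 0 < t) :
    (4 * Real.pi * t) ^ (-(1:ℝ) / 2) * (2 * Real.sqrt t) = 1 / Real.sqrt Real.pi := by
  have hπ : (0:ℝ) < Real.sqrt Real.pi := Real.sqrt_pos.2 Real.pi_pos
  have hst : (0:ℝ) < Real.sqrt t := Real.sqrt_pos.2 ht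
  rw [show (-(1:ℝ)/2) = -(1/2 : ℝ) by norm_num,
    Real.rpow_neg (by positivity), ← Real.sqrt_eq_rpow,
    show 4 * Real.pi * t = (2 * Real.sqrt Real.pi * Real.sqrt t) ^ 2 by
      rw [mul_pow, mul_pow, Real.sq_sqrt Real.pi_pos.le, Real.sq_sqrt ht.le]; ring,
    Real.sqrt_sq (by positivity)]
  field_simp

lemma inner_eq (a b t : ℝ) (ht : 0 < t) (x : ℝ) :
    (∫ y in a..b, heatKernel t x y) =
      (1 / Real.sqrt Real.pi) * (Ef ((x - a) / (2 * Real.sqrt t))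
        - Ef ((x - b) / (2 * Real.sqrt t))) := by
  set σ : ℝ := 2 * Real.sqrt t with hσdef
  have hσ : (0:ℝ) < σ := by
    have : (0:ℝ) < Real.sqrt t := Real.sqrt_pos.2 ht
    positivity
  have hσ2 : σ ^ 2 = 4 * t := by
    rw [hσdef, mul_pow, Real.sq_sqrt ht.le]; norm_num
  have h2eq : ∀ u : ℝ, Real.exp (-u ^ 2 / (4 * t)) = Real.exp (-(u / σ) ^ 2) := by
    intro u
    congr 1
    rw [div_pow, hσ2]
    ring
  have step1 : (∫ y in a..b, Real.exp (-(x - y) ^ 2 / (4 * t)))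
      = ∫ u in (x - b)..(x - a), Real.exp (-(u / σ) ^ 2) := by
    rw [← intervalIntegral.integral_comp_sub_left (fun u => Real.exp (-(u / σ) ^ 2)) x]
    apply intervalIntegral.integral_congr
    intro y _
    exact h2eq (x - y)
  have step2 : (∫ u in (x - b)..(x - a), Real.exp (-(u / σ) ^ 2))
      = σ * (Ef ((x - a) / σ) - Ef ((x - b) / σ)) := by
    rw [intervalIntegral.integral_comp_div (f := fun v : ℝ => Real.exp (-v ^ 2)) hσ.ne']
    rw [smul_eq_mul, Ef_sub]
  unfold heatKernel
  rw [intervalIntegral.integral_const_mul, step1, step2, ← mul_assoc, coeff_eq t ht]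

lemma outer_eq (a b c t : ℝ) (ht : 0 < t) :
    (∫ x in a..c, (1 / Real.sqrt Real.pi) * (Ef ((x - a) / (2 * Real.sqrt t))
        - Ef ((x - b) / (2 * Real.sqrt t))))
    = (2 * Real.sqrt t / Real.sqrt Real.pi) *
        ((Psi ((c - a) / (2 * Real.sqrt t)) - Psi ((c - b) / (2 * Real.sqrt t)))
          - (Psi ((a - a) / (2 * Real.sqrt t)) - Psi ((a - b) / (2 * Real.sqrt t)))) := by
  set σ : ℝ := 2 * Real.sqrt t with hσdef
  have hσ : (0:ℝ) < σ := by
    have : (0:ℝ) < Real.sqrt t := Real.sqrt_pos.2 ht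
    positivity
  have hπ : (0:ℝ) < Real.sqrt Real.pi := Real.sqrt_pos.2 Real.pi_pos
  have key : ∀ x : ℝ, HasDerivAt
      (fun x : ℝ => (σ / Real.sqrt Real.pi) * (Psi ((x - a) / σ) - Psi ((x - b) / σ)))
      ((1 / Real.sqrt Real.pi) * (Ef ((x - a) / σ) - Ef ((x - b) / σ))) x := by
    intro x
    have hxa : HasDerivAt (fun x : ℝ => (x - a) / σ) (1 / σ) x := by
      simpa using ((hasDerivAt_id x).sub_const a).div_const σ
    have hxb : HasDerivAt (fun x : ℝ => (x - b) / σ) (1 / σ) x := by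
      simpa using ((hasDerivAt_id x).sub_const b).div_const σ
    have h1 := (Psi_hasDerivAt ((x - a) / σ)).comp x hxa
    have h2 := (Psi_hasDerivAt ((x - b) / σ)).comp x hxb
    have h := (h1.sub h2).const_mul (σ / Real.sqrt Real.pi)
    refine h.congr_deriv ?_
    field_simp
  have hint : IntervalIntegrable
      (fun x : ℝ => (1 / Real.sqrt Real.pi) * (Ef ((x - a) / σ) - Ef ((x - b) / σ)))
      volume a c := by
    apply Continuous.intervalIntegrable
    exact continuous_const.mul
      ((Ef_cont.comp (by continuity)).sub (Ef_cont.comp (by continuity)))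
  rw [intervalIntegral.integral_eq_sub_of_hasDerivAt (fun x _ => key x) hint]
  ring

lemma ind_eq (a b c : ℝ) (hab : a < b) (hbc : b < c) :
    (∫ x in a..c, Set.indicator (Set.Ioo a b) (fun _ => (1:ℝ)) x) = b - a := by
  rw [intervalIntegral.integral_of_le (le_of_lt (lt_trans hab hbc)),
    setIntegral_indicator measurableSet_Ioo]
  have hsub : Set.Ioc a c ∩ Set.Ioo a b = Set.Ioo a b := by
    apply Set.inter_eq_self_of_subset_right
    intro x hx
    exact ⟨hx.1, le_of_lt (lt_of_lt_of_le hx.2 hbc.le)⟩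
  rw [hsub]
  simp [Real.volume_Ioo, ENNReal.toReal_ofReal (by linarith : (0:ℝ) ≤ b - a), hab.le]

lemma main_eq (a b c : ℝ) (hab : a < b) (hbc : b < c) (t : ℝ) (ht : 0 < t) :
    t ^ (-(1 : ℝ) / 2) *
        (∫ x in a..c,
          (Set.indicator (Set.Ioo a b) (fun _ => (1 : ℝ)) x - ∫ y in a..b, heatKernel t x y))
    = 1 / Real.sqrt Real.pi + (2 / Real.sqrt Real.pi) *
        (rfun ((c - b) / (2 * Real.sqrt t)) - rfun ((c - a) / (2 * Real.sqrt t))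
          - rfun ((b - a) / (2 * Real.sqrt t))) := by
  have hst : (0:ℝ) < Real.sqrt t := Real.sqrt_pos.2 ht
  have hπ : (0:ℝ) < Real.sqrt Real.pi := Real.sqrt_pos.2 Real.pi_pos
  have hind : IntervalIntegrable (Set.indicator (Set.Ioo a b) (fun _ => (1:ℝ))) volume a c := by
    apply MeasureTheory.Integrable.intervalIntegrable
    rw [integrable_indicator_iff measurableSet_Ioo]
    exact integrableOn_const measure_Ioo_lt_top.ne
  have hcont : IntervalIntegrable
      (fun x : ℝ => (1 / Real.sqrt Real.pi) * (Ef ((x - a) / (2 * Real.sqrt t))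
        - Ef ((x - b) / (2 * Real.sqrt t)))) volume a c := by
    apply Continuous.intervalIntegrable
    exact continuous_const.mul
      ((Ef_cont.comp (by continuity)).sub (Ef_cont.comp (by continuity)))
  simp only [inner_eq a b t ht]
  rw [intervalIntegral.integral_sub hind hcont, ind_eq a b c hab hbc, outer_eq a b c t ht]
  rw [show (a - a) / (2 * Real.sqrt t) = 0 by simp,
    show (a - b) / (2 * Real.sqrt t) = -((b - a) / (2 * Real.sqrt t)) by ring,
    Psi_neg, Psi_zero]
  rw [show (-(1:ℝ)/2) = -(1/2 : ℝ) by norm_num, Real.rpow_neg ht.le, ← Real.sqrt_eq_rpow]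
  unfold rfun
  field_simp
  ring

/-- Bilinear limit formula for `E = (a,b)` and `F = (a,c)`, sharing the boundary point `a`. -/
theorem stmt_8 (a b c : ℝ) (hab : a < b) (hbc : b < c) :
    Tendsto (fun t : ℝ => t ^ (-(1 : ℝ) / 2) *
        ∫ x in a..c,
          (Set.indicator (Set.Ioo a b) (fun _ => (1 : ℝ)) x - ∫ y in a..b, heatKernel t x y))
      (nhdsWithin 0 (Set.Ioi 0)) (nhds (1 / Real.sqrt Real.pi)) := by
  have hπ : (0:ℝ) < Real.sqrt Real.pi := Real.sqrt_pos.2 Real.pi_pos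
  have hA : ∀ d : ℝ, 0 < d →
      Tendsto (fun t : ℝ => d / (2 * Real.sqrt t)) (nhdsWithin 0 (Set.Ioi 0)) atTop := by
    intro d hd
    have h1 : Tendsto (fun t : ℝ => 2 * Real.sqrt t) (nhdsWithin 0 (Set.Ioi 0))
        (nhdsWithin 0 (Set.Ioi 0)) := by
      rw [tendsto_nhdsWithin_iff]
      constructor
      · have : Tendsto (fun t : ℝ => 2 * Real.sqrt t) (nhds 0) (nhds 0) := by
          have h := (Real.continuous_sqrt.tendsto 0).const_mul 2
          simpa using h
        exact this.mono_left nhdsWithin_le_nhds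
      · filter_upwards [self_mem_nhdsWithin] with t ht
        have ht' : (0:ℝ) < t := ht
        have hst : (0:ℝ) < Real.sqrt t := Real.sqrt_pos.2 ht'
        simp only [Set.mem_Ioi]
        positivity
    have h2 := (tendsto_inv_nhdsGT_zero.comp h1).const_mul_atTop hd
    refine h2.congr fun t => ?_
    simp [div_eq_mul_inv, Function.comp]
  have hr := rfun_lim
  have main : Tendsto (fun t : ℝ => 1 / Real.sqrt Real.pi + (2 / Real.sqrt Real.pi) *
      (rfun ((c - b) / (2 * Real.sqrt t)) - rfun ((c - a) / (2 * Real.sqrt t))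
        - rfun ((b - a) / (2 * Real.sqrt t)))) (nhdsWithin 0 (Set.Ioi 0))
      (nhds (1 / Real.sqrt Real.pi)) := by
    have h0 : Tendsto (fun t : ℝ =>
        rfun ((c - b) / (2 * Real.sqrt t)) - rfun ((c - a) / (2 * Real.sqrt t))
          - rfun ((b - a) / (2 * Real.sqrt t))) (nhdsWithin 0 (Set.Ioi 0)) (nhds 0) := by
      have h1 := hr.comp (hA (c - b) (by linarith))
      have h2 := hr.comp (hA (c - a) (by linarith))
      have h3 := hr.comp (hA (b - a) (by linarith))
      have := (h1.sub h2).sub h3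
      simpa using this
    have := (h0.const_mul (2 / Real.sqrt Real.pi)).const_add (1 / Real.sqrt Real.pi)
    simpa using this
  refine main.congr' ?_
  filter_upwards [self_mem_nhdsWithin] with t ht
  exact (main_eq a b c hab hbc t ht).symm
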